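/- Let q be a positive integer and let a be a complex number with 0 < |a| < 1. Then ζ̄(2q; −a) − ζ̄(2q; a) = −2 Σ_{j=1}^∞ C(2j+2q−2, 2j−1)·ζ̄(2q+2j−1)·a^{2j−1}, i.e., the left-hand side is the sum of the convergent power series in a with coefficients −2·C(2j+2q−2, 2j−1)·ζ̄(2q+2j−1) at a^{2j−1}, where C(·,·) denotes binomial coefficients. -/

import Mathlib

open Complex Finset Real

/-- Generalized harmonic number `H_n^{(p)}` as a complex number. -/
noncomputable def gH (p n : ℕ) : ℂ := ∑ k ∈ Finset.range n, (1 : ℂ) / ((k : ℂ) + 1) ^ p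

/-- Complex digamma function, defined via its series expansion. -/
noncomputable def digammaC (a : ℂ) : ℂ :=
  -(Real.eulerMascheroniConstant : ℂ) + ∑' n : ℕ, ((1 : ℂ) / ((n : ℂ) + 1) - 1 / ((n : ℂ) + a))

/-- Polygamma function `ψ^{(j)}` of order `j` (with `ψ^{(0)} = ψ`). -/
noncomputable def polygammaC (j : ℕ) (a : ℂ) : ℂ :=
  if j = 0 then digammaC a
  else (-1 : ℂ) ^ (j + 1) * (Nat.factorial j) * ∑' k : ℕ, (1 : ℂ) / (a + (k : ℂ)) ^ (j + 1)

/-- Hurwitz zeta value `ζ(s; a)` at integer `s ≥ 1`, with the convention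
`ζ(1; a) = -(ψ(a) + γ)`. -/
noncomputable def hzeta (s : ℕ) (a : ℂ) : ℂ :=
  if s = 1 then -(digammaC a + (Real.eulerMascheroniConstant : ℂ))
  else ∑' n : ℕ, (1 : ℂ) / ((n : ℂ) + a) ^ s

/-- Riemann zeta value at a nonnegative integer, with the conventions
`ζ(0) = -1/2` and `ζ(1) = 0`. -/
noncomputable def zval (s : ℕ) : ℂ :=
  if s = 0 then -1/2 else if s = 1 then 0 else ∑' n : ℕ, (1 : ℂ) / ((n : ℂ) + 1) ^ s

/-- Alternating Riemann zeta value `ζ̄(s) = Σ_{n≥1} (-1)^{n-1}/n^s`, with the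
convention `ζ̄(0) = 1/2`. -/
noncomputable def azval (s : ℕ) : ℂ :=
  if s = 0 then 1/2 else ∑' n : ℕ, (-1 : ℂ) ^ n / ((n : ℂ) + 1) ^ s

/-- Alternating Hurwitz zeta value `ζ̄(s; a) = Σ_{n≥0} (-1)^n/(n+a)^s`. -/
noncomputable def ahzeta (s : ℕ) (a : ℂ) : ℂ :=
  ∑' n : ℕ, (-1 : ℂ) ^ n / ((n : ℂ) + a) ^ s

/-- Alternating double zeta value `ζ(overline{2j}, 2m+1)`. -/
noncomputable def altDoubleZeta (j m : ℕ) : ℂ :=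
  ∑' n : ℕ, (-1 : ℂ) ^ (n + 1) * gH (2 * m + 1) n / ((n : ℂ) + 1) ^ (2 * j)



lemma sum_one_div_sq : Summable fun n : ℕ => 1/((n:ℝ)+1)^2 := by
  have h := (Real.summable_one_div_nat_pow (p := 2)).mpr one_lt_two
  have := (summable_nat_add_iff 1).mpr h
  refine this.congr fun n => ?_
  push_cast; ring_nf

lemma summable_alt (b : ℂ) (hb : ‖b‖ < 1) (s : ℕ) (hs : 2 ≤ s) :
    Summable fun n : ℕ => (-1 : ℂ) ^ n / ((n : ℂ) + b) ^ s := by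
  rw [← summable_nat_add_iff 1]
  apply Summable.of_norm
  set t : ℝ := 1 - ‖b‖ with htdef
  have ht : (0:ℝ) < t := by rw [htdef]; linarith
  refine Summable.of_nonneg_of_le (fun n => norm_nonneg _)
    (fun n => ?_) ((sum_one_div_sq.mul_left ((1/t)^s)))
  have hn1 : (1:ℝ) ≤ (n:ℝ) + 1 := by linarith [Nat.cast_nonneg (α := ℝ) n]
  have hnb : t * ((n:ℝ)+1) ≤ ‖((n:ℂ)+1) + b‖ := by
    have h1 : ‖((n:ℂ)+1)‖ - ‖-b‖ ≤ ‖((n:ℂ)+1) - (-b)‖ := norm_sub_norm_le _ _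
    simp only [sub_neg_eq_add, norm_neg] at h1
    have h2 : ‖((n:ℂ)+1)‖ = (n:ℝ)+1 := by
      rw [show ((n:ℂ)+1) = ((n+1:ℕ):ℂ) by push_cast; ring, Complex.norm_natCast]
      push_cast; ring
    rw [h2] at h1
    nlinarith [norm_nonneg b]
  have hnorm : ‖(-1 : ℂ) ^ (n+1) / (((n+1:ℕ) : ℂ) + b) ^ s‖
      = 1 / ‖((n:ℂ)+1) + b‖ ^ s := by
    rw [norm_div, norm_pow, norm_pow, norm_neg, norm_one, one_pow]
    push_cast; ring_nf
  rw [hnorm]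
  have hts : (0:ℝ) < t ^ s := pow_pos ht s
  have key : t^s * ((n:ℝ)+1)^2 ≤ ‖((n:ℂ)+1) + b‖ ^ s := by
    calc t^s * ((n:ℝ)+1)^2 ≤ t^s * ((n:ℝ)+1)^s := by
          have := pow_le_pow_right₀ hn1 hs
          nlinarith
      _ = (t * ((n:ℝ)+1))^s := by rw [mul_pow]
      _ ≤ _ := pow_le_pow_left₀ (by positivity) hnb s
  have hx : (0:ℝ) < ‖((n:ℂ)+1) + b‖ ^ s := lt_of_lt_of_le (by positivity) key
  rw [div_le_iff₀ hx]
  have hpos2 : (0:ℝ) < (1/t)^s * (1/((n:ℝ)+1)^2) := by positivity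
  calc (1:ℝ) = (1/t)^s * (1/((n:ℝ)+1)^2) * (t^s * ((n:ℝ)+1)^2) := by
        field_simp
        rw [div_pow, one_pow, div_mul_cancel₀ _ (pow_ne_zero _ ht.ne')]
    _ ≤ _ := mul_le_mul_of_nonneg_left key hpos2.le


lemma expansion_step (q : ℕ) (hq : 0 < q) (a : ℂ) (ha1 : ‖a‖ < 1) (m : ℕ) :
    HasSum (fun j : ℕ => 2 * ((Nat.choose (2*j + 2*q) (2*j+1)) : ℂ) * a^(2*j+1) /
        ((m:ℂ)+1)^(2*q + 2*j + 1))
      (1/(((m:ℂ)+1) - a)^(2*q) - 1/(((m:ℂ)+1) + a)^(2*q)) := by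
  set M : ℂ := (m:ℂ)+1 with hMdef
  have hMnorm : (1:ℝ) ≤ ‖M‖ := by
    rw [hMdef, show ((m:ℂ)+1) = ((m+1:ℕ):ℂ) by push_cast; ring, Complex.norm_natCast]
    exact_mod_cast Nat.one_le_iff_ne_zero.mpr (Nat.succ_ne_zero m)
  have hM : M ≠ 0 := by intro h; rw [h] at hMnorm; simp at hMnorm; linarith
  set r : ℂ := a / M with hrdef
  have hr : ‖r‖ < 1 := by
    rw [hrdef, norm_div]
    calc ‖a‖ / ‖M‖ ≤ ‖a‖ / 1 := by
          apply div_le_div_of_nonneg_left (norm_nonneg a) one_pos hMnorm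
      _ < 1 := by simpa using ha1
  have hrn : ‖-r‖ < 1 := by rwa [norm_neg]
  have h1 := hasSum_choose_mul_geometric_of_norm_lt_one (𝕜 := ℂ) (2*q-1) hr
  have h2 := hasSum_choose_mul_geometric_of_norm_lt_one (𝕜 := ℂ) (2*q-1) hrn
  have hqq : 2*q-1+1 = 2*q := by omega
  rw [hqq] at h1 h2
  have h3 := h1.sub h2
  -- restrict to odd indices
  have einj : Function.Injective (fun j : ℕ => 2*j+1) := fun x y h => by dsimp at h; omega
  have hvanish : ∀ x ∉ Set.range (fun j : ℕ => 2*j+1),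
      (((x + (2*q-1)).choose (2*q-1) : ℂ) * r ^ x -
        ((x + (2*q-1)).choose (2*q-1) : ℂ) * (-r) ^ x) = 0 := by
    intro x hx
    have hev : Even x := by
      rcases Nat.even_or_odd x with h | h
      · exact h
      · exfalso
        obtain ⟨c, hc⟩ := h
        exact hx ⟨c, by dsimp; omega⟩
    rw [hev.neg_pow]
    ring
  have h4 := (Function.Injective.hasSum_iff einj hvanish).mpr h3
  have h5 := h4.div_const (M^(2*q))
  convert h5 using 1
  · rfl
  · funext j
    simp only [Function.comp_apply]
    have hodd : Odd (2*j+1) := ⟨j, by ring⟩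
    rw [hodd.neg_pow]
    have hchoose : (2*j + 2*q).choose (2*j+1) = (2*j+1 + (2*q-1)).choose (2*q-1) := by
      have h' : 2*j+1 + (2*q-1) = 2*j + 2*q := by omega
      rw [h']
      rw [← Nat.choose_symm (by omega : 2*j+1 ≤ 2*j+2*q)]
      congr 1
      omega
    rw [hchoose, hrdef]
    rw [div_pow]
    have hMp : M ^ (2*j+1) ≠ 0 := pow_ne_zero _ hM
    have hMq : M ^ (2*q) ≠ 0 := pow_ne_zero _ hM
    field_simp
    rw [show 2*q + 2*j+1 = (2*j+1) + 2*q by ring, pow_add]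
    ring
  · -- sum equality
    have hMa : M - a ≠ 0 := by
      intro h
      have : ‖a‖ = ‖M‖ := by rw [show a = M by linear_combination -h]
      linarith
    have hMb : M + a ≠ 0 := by
      intro h
      have : ‖a‖ = ‖M‖ := by
        rw [show a = -M by linear_combination h]; rw [norm_neg]
      linarith
    have e1 : (1:ℂ) - r = (M - a)/M := by rw [hrdef]; field_simp
    have e2 : (1:ℂ) - -r = (M + a)/M := by rw [hrdef]; field_simp; ring
    rw [e1, e2, div_pow, div_pow]
    rw [one_div_div, one_div_div]
    field_simp

lemma sum_one_div_pow (s : ℕ) (hs : 2 ≤ s) :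
    Summable fun n : ℕ => 1/((n:ℝ)+1)^s := by
  refine Summable.of_nonneg_of_le (fun n => by positivity) (fun n => ?_) sum_one_div_sq
  have h1 : (1:ℝ) ≤ (n:ℝ)+1 := by linarith [Nat.cast_nonneg (α := ℝ) n]
  have := pow_le_pow_right₀ h1 hs
  have h2 : (0:ℝ) < ((n:ℝ)+1)^2 := by positivity
  rw [div_le_div_iff₀ (by positivity) h2]
  nlinarith

lemma summable_c (q : ℕ) (hq : 0 < q) (a : ℂ) (ha1 : ‖a‖ < 1) :
    Summable fun j : ℕ => 2 * (((2*j + 2*q).choose (2*j+1) : ℕ) : ℝ) * ‖a‖^(2*j+1) := by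
  have hr : ‖(‖a‖ : ℝ)‖ < 1 := by rwa [Real.norm_eq_abs, _root_.abs_of_nonneg (norm_nonneg a)]
  have h := summable_choose_mul_geometric_of_norm_lt_one (R := ℝ) (2*q-1) hr
  have h2 := (h.comp_injective (fun x y h => by dsimp at h; omega : Function.Injective fun j : ℕ => 2*j+1)).mul_left 2
  refine h2.congr fun j => ?_
  simp only [Function.comp_apply]
  have hchoose : (2*j+1 + (2*q-1)).choose (2*q-1) = (2*j + 2*q).choose (2*j+1) := by
    have h' : 2*j+1 + (2*q-1) = 2*j + 2*q := by omega
    rw [h', ← Nat.choose_symm (by omega : 2*j+1 ≤ 2*j+2*q)]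
    congr 1; omega
  rw [hchoose]; ring

lemma summable_F (q : ℕ) (hq : 0 < q) (a : ℂ) (ha1 : ‖a‖ < 1) :
    Summable fun p : ℕ × ℕ => (-1:ℂ)^(p.2+1) *
      (2 * (((2*p.1 + 2*q).choose (2*p.1+1) : ℕ) : ℂ) * a^(2*p.1+1) /
        ((p.2:ℂ)+1)^(2*q + 2*p.1 + 1)) := by
  apply Summable.of_norm
  have hnorm : ∀ p : ℕ × ℕ, ‖(-1:ℂ)^(p.2+1) *
      (2 * (((2*p.1 + 2*q).choose (2*p.1+1) : ℕ) : ℂ) * a^(2*p.1+1) /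
        ((p.2:ℂ)+1)^(2*q + 2*p.1 + 1))‖ =
      (2 * (((2*p.1 + 2*q).choose (2*p.1+1) : ℕ) : ℝ) * ‖a‖^(2*p.1+1)) *
        (1/(((p.2:ℕ):ℝ)+1)^(2*q + 2*p.1 + 1)) := by
    intro p
    rw [norm_mul, norm_pow, norm_neg, norm_one, one_pow, one_mul, norm_div, norm_mul, norm_mul,
      norm_pow, norm_pow]
    have : ‖((p.2:ℂ)+1)‖ = ((p.2:ℕ):ℝ)+1 := by
      rw [show ((p.2:ℂ)+1) = ((p.2+1:ℕ):ℂ) by push_cast; ring, Complex.norm_natCast]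
      push_cast; ring
    rw [this]
    simp [Complex.norm_natCast]
    ring
  have SG : Summable fun p : ℕ × ℕ =>
      (2 * (((2*p.1 + 2*q).choose (2*p.1+1) : ℕ) : ℝ) * ‖a‖^(2*p.1+1)) *
        (1/(((p.2:ℕ):ℝ)+1)^(2*q + 2*p.1 + 1)) := by
    rw [summable_prod_of_nonneg (fun p => by positivity)]
    refine ⟨fun j => (sum_one_div_pow (2*q+2*j+1) (by omega)).mul_left
      (2 * (((2*j + 2*q).choose (2*j+1) : ℕ) : ℝ) * ‖a‖^(2*j+1)), ?_⟩
    set K : ℝ := ∑' m : ℕ, 1/((m:ℝ)+1)^2 with hK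
    refine Summable.of_nonneg_of_le (fun j => tsum_nonneg fun m => by positivity)
      (fun j => ?_) ((summable_c q hq a ha1).mul_right K)
    rw [← tsum_mul_left]
    refine Summable.tsum_le_tsum (fun m => ?_) ((sum_one_div_pow (2*q+2*j+1) (by omega)).mul_left
        (2 * (((2*j + 2*q).choose (2*j+1) : ℕ) : ℝ) * ‖a‖^(2*j+1)))
      (sum_one_div_sq.mul_left (2 * (((2*j + 2*q).choose (2*j+1) : ℕ) : ℝ) * ‖a‖^(2*j+1)))
    have hc : (0:ℝ) ≤ 2 * (((2*j + 2*q).choose (2*j+1) : ℕ) : ℝ) * ‖a‖^(2*j+1) := by positivity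
    refine mul_le_mul_of_nonneg_left ?_ hc
    have h1 : (1:ℝ) ≤ (m:ℝ)+1 := by linarith [Nat.cast_nonneg (α := ℝ) m]
    have := pow_le_pow_right₀ h1 (by omega : 2 ≤ 2*q+2*j+1)
    have h2 : (0:ℝ) < ((m:ℝ)+1)^2 := by positivity
    rw [div_le_div_iff₀ (by positivity) h2]
    nlinarith
  exact SG.congr fun p => (hnorm p).symm

lemma hasSum_azval_aux (s : ℕ) (hs : 2 ≤ s) :
    HasSum (fun m : ℕ => (-1:ℂ)^m/((m:ℂ)+1)^s) (azval s) := by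
  have hsum : Summable fun m : ℕ => (-1:ℂ)^m/((m:ℂ)+1)^s := by
    apply Summable.of_norm
    refine (sum_one_div_pow s hs).congr fun m => ?_
    rw [norm_div, norm_pow, norm_pow, norm_neg, norm_one, one_pow]
    rw [show ((m:ℂ)+1) = ((m+1:ℕ):ℂ) by push_cast; ring, Complex.norm_natCast]
    push_cast; ring
  have := hsum.hasSum
  rwa [azval, if_neg (by omega)]

lemma hasSum_ahzeta_aux (b : ℂ) (hb : ‖b‖ < 1) (s : ℕ) (hs : 2 ≤ s) :
    HasSum (fun n : ℕ => (-1 : ℂ) ^ n / ((n : ℂ) + b) ^ s) (ahzeta s b) := by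
  have := (summable_alt b hb s hs).hasSum
  rwa [ahzeta]

/-- Power series expansion of the antisymmetrized alternating Hurwitz zeta function. -/
theorem alt_hurwitz_zeta_antisym_expansion (q : ℕ) (hq : 0 < q) (a : ℂ)
    (ha : 0 < ‖a‖) (ha1 : ‖a‖ < 1) :
    HasSum
      (fun j : ℕ =>
        -2 * (Nat.choose (2 * j + 2 * q) (2 * j + 1) : ℂ) *
          azval (2 * q + 2 * j + 1) * a ^ (2 * j + 1))
      (ahzeta (2 * q) (-a) - ahzeta (2 * q) a) := by
  have ha1' : ‖a‖ < 1 := ha1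
  have hs : 2 ≤ 2*q := by omega
  -- the basic series for the two alternating Hurwitz zeta values
  have h1 := hasSum_ahzeta_aux (-a) (by rwa [norm_neg]) (2*q) hs
  have h2 := hasSum_ahzeta_aux a ha1' (2*q) hs
  set D : ℕ → ℂ := fun n =>
    (-1 : ℂ) ^ n / ((n : ℂ) + -a) ^ (2*q) - (-1 : ℂ) ^ n / ((n : ℂ) + a) ^ (2*q) with hD
  have hDsum : HasSum D (ahzeta (2*q) (-a) - ahzeta (2*q) a) := h1.sub h2
  have hD0 : D 0 = 0 := by
    have : ((-a) : ℂ) ^ (2*q) = a ^ (2*q) := (Even.neg_pow ⟨q, by ring⟩ a)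
    simp only [hD, Nat.cast_zero, pow_zero, zero_add, this]
    ring
  have hDshift : HasSum (fun n => D (n+1)) (ahzeta (2*q) (-a) - ahzeta (2*q) a) := by
    refine (hasSum_nat_add_iff 1).mpr ?_
    simpa [hD0] using hDsum
  -- the double series
  set F : ℕ × ℕ → ℂ := fun p => (-1:ℂ)^(p.2+1) *
      (2 * (((2*p.1 + 2*q).choose (2*p.1+1) : ℕ) : ℂ) * a^(2*p.1+1) /
        ((p.2:ℂ)+1)^(2*q + 2*p.1 + 1)) with hF
  have hFsummable : Summable F := summable_F q hq a ha1'
  have hFT := hFsummable.hasSum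
  set T : ℂ := ∑' p, F p with hT
  -- fiberwise over the second coordinate: recover D (m+1)
  have hswap : HasSum (fun p : ℕ × ℕ => F (p.2, p.1)) T := by
    have := ((Equiv.prodComm ℕ ℕ).hasSum_iff (f := F) (a := T)).mpr hFT
    exact this
  have hfiber2 : ∀ m : ℕ, HasSum (fun j => F (j, m)) (D (m+1)) := by
    intro m
    have h := (expansion_step q hq a ha1' m).mul_left ((-1:ℂ)^(m+1))
    have heq : D (m+1) = (-1:ℂ)^(m+1) *
        (1/(((m:ℂ)+1) - a)^(2*q) - 1/(((m:ℂ)+1) + a)^(2*q)) := by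
      simp only [hD]
      push_cast
      ring
    rw [heq]
    exact h
  have hDT : HasSum (fun m => D (m+1)) T := hswap.prod_fiberwise hfiber2
  have hTS : T = ahzeta (2*q) (-a) - ahzeta (2*q) a := hDT.unique hDshift
  have hfiber1 : ∀ j : ℕ, HasSum (fun m => F (j, m))
      (-2 * (((2*j + 2*q).choose (2*j+1) : ℕ) : ℂ) * azval (2*q + 2*j + 1) * a^(2*j+1)) := by
    intro j
    have hz := hasSum_azval_aux (2*q+2*j+1) (by omega)
    have h := hz.mul_left (-(2 * (((2*j + 2*q).choose (2*j+1) : ℕ) : ℂ) * a^(2*j+1)))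
    convert h using 1
    · rfl
    · funext m
      simp only [hF]
      ring
    · ring
  have final := hFT.prod_fiberwise hfiber1
  rwa [hTS] at final
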